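/- For every integer n ≥ 2 and every positive integer k, the region 𝒯(3,2ⁿ,1,k) (the tuple 3, then n entries equal to 2, then 1, then k) is nonempty if and only if 4n+2 ≤ k ≤ 4n+8, and the two-dimensional Lebesgue measure of the union ⋃_{k=4n+2}^{4n+8} 𝒯(3,2ⁿ,1,k) equals 2/((2n+1)(2n+3)(2n+5)). -/

import Mathlib

open MeasureTheory Set

/-- The BCZ transform T(x,y) = (y, ⌊(1+x)/y⌋·y − x). -/
noncomputable def bcz (p : ℝ × ℝ) : ℝ × ℝ :=
  (p.2, (⌊(1 + p.1) / p.2⌋ : ℝ) * p.2 - p.1)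

/-- The Farey triangle 𝒯 = {(x,y) : 0 < x ≤ 1, 0 < y ≤ 1, x + y > 1}. -/
def fareyTriangle : Set (ℝ × ℝ) :=
  {p | 0 < p.1 ∧ p.1 ≤ 1 ∧ 0 < p.2 ∧ p.2 ≤ 1 ∧ 1 < p.1 + p.2}

/-- The region 𝒯(k) = {(x,y) ∈ 𝒯 : ⌊(1+x)/y⌋ = k}. -/
def TT (k : ℕ) : Set (ℝ × ℝ) :=
  {p | p ∈ fareyTriangle ∧ ⌊(1 + p.1) / p.2⌋ = (k : ℤ)}

/-- The region 𝒯(k₁,…,k_r) = 𝒯(k₁) ∩ T⁻¹(𝒯(k₂)) ∩ ⋯ ∩ T^{−(r−1)}(𝒯(k_r)). -/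
noncomputable def TTlist (ks : List ℕ) : Set (ℝ × ℝ) :=
  ⋂ i : Fin ks.length, (bcz^[i.1]) ⁻¹' TT (ks.get i)

lemma floor_div_eq_iff {u v : ℝ} (hv : 0 < v) (m : ℤ) :
    ⌊(1 + u) / v⌋ = m ↔ (m : ℝ) * v ≤ 1 + u ∧ 1 + u < ((m : ℝ) + 1) * v := by
  rw [Int.floor_eq_iff, le_div_iff₀ hv, div_lt_iff₀ hv]

lemma TTlist_nil : TTlist [] = Set.univ := by simp [TTlist]

lemma TTlist_cons (c : ℕ) (ks : List ℕ) :
    TTlist (c :: ks) = TT c ∩ bcz ⁻¹' TTlist ks := by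
  ext p
  simp only [TTlist, Set.mem_iInter, Set.mem_inter_iff, Set.mem_preimage]
  constructor
  · intro h
    refine ⟨h ⟨0, by simp⟩, fun i => ?_⟩
    have := h i.succ
    simpa [Function.iterate_succ_apply] using this
  · rintro ⟨h0, h⟩ i
    refine Fin.cases ?_ (fun i => ?_) i
    · simpa using h0
    · have := h i
      simpa [Function.iterate_succ_apply] using this

lemma mem_TT_iff {m : ℕ} {u v : ℝ} :
    (u, v) ∈ TT m ↔ (0 < u ∧ u ≤ 1 ∧ 0 < v ∧ v ≤ 1 ∧ 1 < u + v ∧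
      (m : ℝ) * v ≤ 1 + u ∧ 1 + u < ((m : ℝ) + 1) * v) := by
  constructor
  · rintro ⟨⟨h1, h2, h3, h4, h5⟩, hf⟩
    have := (floor_div_eq_iff h3 (m : ℤ)).1 hf
    push_cast at this
    exact ⟨h1, h2, h3, h4, h5, this.1, this.2⟩
  · rintro ⟨h1, h2, h3, h4, h5, h6, h7⟩
    refine ⟨⟨h1, h2, h3, h4, h5⟩, (floor_div_eq_iff h3 (m : ℤ)).2 ?_⟩
    push_cast
    exact ⟨h6, h7⟩

lemma bcz_eq {u v : ℝ} {m : ℕ} (h : (u, v) ∈ TT m) : bcz (u, v) = (v, (m : ℝ) * v - u) := by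
  have hf : ⌊(1 + u) / v⌋ = (m : ℤ) := h.2
  simp [bcz, hf]

def RHS (m k : ℕ) (u v : ℝ) : Prop :=
  0 < u ∧ 1 < u + v ∧ v + (m : ℝ) * (v - u) ≤ 1 ∧ 1 < v + ((m : ℝ) + 1) * (v - u) ∧
  (k : ℝ) * (v - u) ≤ 1 + v + (m : ℝ) * (v - u) ∧
  1 + v + (m : ℝ) * (v - u) < ((k : ℝ) + 1) * (v - u)

lemma chain (k : ℕ) : ∀ (m : ℕ) (u v : ℝ),
    ((u, v) ∈ TTlist (List.replicate m 2 ++ [1, k])) ↔ RHS m k u v := by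
  intro m
  induction m with
  | zero =>
    intro u v
    simp only [List.replicate, List.nil_append]
    rw [show ([1, k] : List ℕ) = 1 :: [k] from rfl, TTlist_cons,
      show ([k] : List ℕ) = k :: [] from rfl, TTlist_cons, TTlist_nil]
    simp only [Set.mem_inter_iff, Set.mem_preimage, Set.mem_univ, and_true, RHS]
    constructor
    · rintro ⟨h1, h2⟩
      rw [bcz_eq h1] at h2
      rw [mem_TT_iff] at h1
      rw [mem_TT_iff] at h2
      push_cast at h1 h2 ⊢
      obtain ⟨a1, a2, a3, a4, a5, a6, a7⟩ := h1
      obtain ⟨b1, b2, b3, b4, b5, b6, b7⟩ := h2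
      refine ⟨a1, a5, by linarith, by linarith, by linarith, by linarith⟩
    · rintro ⟨c1, c2, c3, c4, c5, c6⟩
      push_cast at c3 c4 c5 c6
      have he : 0 < v - u := by linarith
      have hv1 : v ≤ 1 := by linarith
      have hu1 : u ≤ 1 := by linarith
      have hv0 : 0 < v := by linarith
      have h1 : (u, v) ∈ TT 1 := by
        rw [mem_TT_iff]; push_cast; exact ⟨c1, hu1, hv0, hv1, c2, by linarith, by linarith⟩
      refine ⟨h1, ?_⟩
      rw [bcz_eq h1, mem_TT_iff]
      push_cast
      exact ⟨hv0, hv1, by linarith, by linarith, by linarith, by linarith, by linarith⟩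
  | succ m ih =>
    intro u v
    rw [show List.replicate (m + 1) 2 ++ [1, k] = 2 :: (List.replicate m 2 ++ [1, k]) by
      simp [List.replicate_succ], TTlist_cons]
    simp only [Set.mem_inter_iff, Set.mem_preimage, RHS]
    constructor
    · rintro ⟨h1, h2⟩
      rw [bcz_eq h1, ih] at h2
      rw [mem_TT_iff] at h1
      obtain ⟨a1, a2, a3, a4, a5, a6, a7⟩ := h1
      obtain ⟨b1, b2, b3, b4, b5, b6⟩ := h2
      push_cast at *
      refine ⟨a1, a5, by linarith, by linarith, by linarith, by linarith⟩
    · rintro ⟨c1, c2, c3, c4, c5, c6⟩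
      push_cast at c3 c4 c5 c6
      have he : 0 < v - u := by linarith
      have hme : 0 ≤ (m : ℝ) * (v - u) := by positivity
      have hv1 : v ≤ 1 := by linarith
      have hu1 : u ≤ 1 := by linarith
      have hv0 : 0 < v := by linarith
      have h1 : (u, v) ∈ TT 2 := by
        rw [mem_TT_iff]; push_cast
        exact ⟨c1, hu1, hv0, hv1, c2, by linarith, by linarith⟩
      refine ⟨h1, ?_⟩
      rw [bcz_eq h1, ih]
      refine ⟨hv0, by push_cast; linarith, by push_cast; linarith, by push_cast; linarith,
        by push_cast; linarith, by push_cast; linarith⟩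

lemma mem_iff (n k : ℕ) (hn : 2 ≤ n) (x y : ℝ) :
    ((x, y) ∈ TTlist (3 :: (List.replicate n 2 ++ [1, k]))) ↔
    (1 < 4 * y - x ∧ x ≤ 1 ∧ y + ((n : ℝ) + 1) * (2 * y - x) ≤ 1 ∧
     1 < y + ((n : ℝ) + 2) * (2 * y - x) ∧
     (k : ℝ) * (2 * y - x) ≤ 1 + y + ((n : ℝ) + 1) * (2 * y - x) ∧
     1 + y + ((n : ℝ) + 1) * (2 * y - x) < ((k : ℝ) + 1) * (2 * y - x)) := by
  rw [TTlist_cons]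
  simp only [Set.mem_inter_iff, Set.mem_preimage]
  constructor
  · rintro ⟨h1, h2⟩
    rw [bcz_eq h1, chain] at h2
    rw [mem_TT_iff] at h1
    obtain ⟨a1, a2, a3, a4, a5, a6, a7⟩ := h1
    obtain ⟨b1, b2, b3, b4, b5, b6⟩ := h2
    push_cast at *
    refine ⟨by linarith, a2, by linarith, by linarith, by linarith, by linarith⟩
  · rintro ⟨C1, C2, C3, C4, C5, C6⟩
    have hn' : (2 : ℝ) ≤ (n : ℝ) := by exact_mod_cast hn
    have hd : 0 < 2 * y - x := by linarith
    have h2d : 2 * (2 * y - x) ≤ (n : ℝ) * (2 * y - x) :=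
      mul_le_mul_of_nonneg_right hn' hd.le
    have h21 : (2 * (n : ℝ) + 1) * (2 * y - x) < 1 := by nlinarith
    have hy1 : y ≤ 1 := by nlinarith
    have hynd : (n : ℝ) * (2 * y - x) < y := by nlinarith
    have hy0 : 0 < y := by linarith
    have hx0 : 0 < x := by nlinarith
    have hxy : 1 < x + y := by nlinarith
    have h3 : (x, y) ∈ TT 3 := by
      rw [mem_TT_iff]; push_cast
      refine ⟨hx0, C2, hy0, hy1, hxy, by nlinarith, by linarith⟩
    refine ⟨h3, ?_⟩
    rw [bcz_eq h3, chain]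
    push_cast
    refine ⟨hy0, by linarith, by nlinarith, by nlinarith, by nlinarith, by nlinarith⟩

lemma tbounds (n : ℕ) (hn : 2 ≤ n) {x y : ℝ}
    (C1 : 1 < 4 * y - x) (C2 : x ≤ 1) (C3 : y + ((n : ℝ) + 1) * (2 * y - x) ≤ 1)
    (C4 : 1 < y + ((n : ℝ) + 2) * (2 * y - x)) :
    0 < 2 * y - x ∧
    (4 * (n : ℝ) + 2) * (2 * y - x) < 1 + y + ((n : ℝ) + 1) * (2 * y - x) ∧
    1 + y + ((n : ℝ) + 1) * (2 * y - x) < (4 * (n : ℝ) + 9) * (2 * y - x) := by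
  have hn' : (2 : ℝ) ≤ (n : ℝ) := by exact_mod_cast hn
  have hd : 0 < 2 * y - x := by linarith
  refine ⟨hd, by nlinarith, by nlinarith⟩

lemma witness (n k : ℕ) (hn : 2 ≤ n) (hk1 : 4 * n + 2 ≤ k) (hk2 : k ≤ 4 * n + 8) :
    (TTlist (3 :: (List.replicate n 2 ++ [1, k]))).Nonempty := by
  have hn' : (2 : ℝ) ≤ (n : ℝ) := by exact_mod_cast hn
  have hk1' : 4 * (n : ℝ) + 2 ≤ (k : ℝ) := by exact_mod_cast hk1
  have hk2' : (k : ℝ) ≤ 4 * (n : ℝ) + 8 := by exact_mod_cast hk2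
  by_cases hc : k ≤ 4 * n + 5
  · have hc' : (k : ℝ) ≤ 4 * (n : ℝ) + 5 := by exact_mod_cast hc
    have hs : (0 : ℝ) < 2 * (k : ℝ) + 1 := by linarith
    refine ⟨((4 * (k : ℝ) - 8 * n - 10) / (2 * k + 1), (2 * (k : ℝ) - 4 * n - 3) / (2 * k + 1)), ?_⟩
    rw [mem_iff n k hn]
    refine ⟨?_, ?_, ?_, ?_, ?_, ?_⟩
    · field_simp; nlinarith
    · rw [div_le_one hs]; nlinarith
    · field_simp; nlinarith
    · field_simp; nlinarith
    · field_simp; nlinarith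
    · field_simp; nlinarith
  · push_neg at hc
    have hc' : 4 * (n : ℝ) + 6 ≤ (k : ℝ) := by
      have : 4 * n + 6 ≤ k := hc
      exact_mod_cast this
    have hs : (0 : ℝ) < 2 * (k : ℝ) - 2 * n - 2 := by linarith
    refine ⟨(1, (2 * (k : ℝ) - 2 * n + 1) / (2 * (2 * k - 2 * n - 2))), ?_⟩
    rw [mem_iff n k hn]
    have hs2 : (0 : ℝ) < 2 * (2 * (k:ℝ) - 2 * n - 2) := by linarith
    have hkn : (0 : ℝ) < k - n - 1 := by linarith
    refine ⟨?_, ?_, ?_, ?_, ?_, ?_⟩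
    · field_simp; nlinarith
    · norm_num
    · field_simp; nlinarith
    · field_simp; nlinarith
    · field_simp; nlinarith
    · field_simp; nlinarith

lemma kmem (n k : ℕ) (hn : 2 ≤ n)
    (h : (TTlist (3 :: (List.replicate n 2 ++ [1, k]))).Nonempty) :
    4 * n + 2 ≤ k ∧ k ≤ 4 * n + 8 := by
  obtain ⟨⟨x, y⟩, hp⟩ := h
  rw [mem_iff n k hn] at hp
  obtain ⟨C1, C2, C3, C4, C5, C6⟩ := hp
  obtain ⟨hd, hlow, hup⟩ := tbounds n hn C1 C2 C3 C4
  have h1 : (4 * (n : ℝ) + 2) < (k : ℝ) + 1 :=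
    lt_of_mul_lt_mul_right (lt_trans hlow C6) hd.le
  have h2 : (k : ℝ) < 4 * (n : ℝ) + 9 :=
    lt_of_mul_lt_mul_right (lt_of_le_of_lt C5 hup) hd.le
  constructor
  · have : ((4 * n + 1 : ℕ) : ℝ) < (k : ℝ) := by push_cast; linarith
    have := Nat.cast_lt.mp this
    omega
  · have : ((k : ℕ) : ℝ) < ((4 * n + 9 : ℕ) : ℝ) := by push_cast; linarith
    have := Nat.cast_lt.mp this
    omega

def Ureg (n : ℕ) : Set (ℝ × ℝ) :=
  {p | 1 < 4 * p.2 - p.1 ∧ p.1 ≤ 1 ∧ p.2 + ((n : ℝ) + 1) * (2 * p.2 - p.1) ≤ 1 ∧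
    1 < p.2 + ((n : ℝ) + 2) * (2 * p.2 - p.1)}

lemma union_eq (n : ℕ) (hn : 2 ≤ n) :
    (⋃ k ∈ Finset.Icc (4 * n + 2) (4 * n + 8),
      TTlist (3 :: (List.replicate n 2 ++ [1, k]))) = Ureg n := by
  ext ⟨x, y⟩
  simp only [Set.mem_iUnion, Finset.mem_Icc, exists_prop, Ureg, Set.mem_setOf_eq]
  constructor
  · rintro ⟨k, hk, hp⟩
    rw [mem_iff n k hn] at hp
    exact ⟨hp.1, hp.2.1, hp.2.2.1, hp.2.2.2.1⟩
  · rintro ⟨C1, C2, C3, C4⟩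
    obtain ⟨hd, hlow, hup⟩ := tbounds n hn C1 C2 C3 C4
    set c := 1 + y + ((n : ℝ) + 1) * (2 * y - x) with hcdef
    set t := c / (2 * y - x) with htdef
    have htl : 4 * (n : ℝ) + 2 < t := by rw [htdef, lt_div_iff₀ hd]; linarith
    have htu : t < 4 * (n : ℝ) + 9 := by rw [htdef, div_lt_iff₀ hd]; linarith
    have hfl : (4 * (n : ℤ) + 2 : ℤ) ≤ ⌊t⌋ := Int.le_floor.2 (by push_cast; linarith)
    have hfu : ⌊t⌋ < (4 * (n : ℤ) + 9 : ℤ) := by rw [Int.floor_lt]; push_cast; linarith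
    have hnn : (0 : ℤ) ≤ ⌊t⌋ := by omega
    have hcast : ((⌊t⌋.toNat : ℕ) : ℝ) = ((⌊t⌋ : ℤ) : ℝ) := by
      rw [← Int.toNat_of_nonneg hnn]; push_cast; rw [Int.toNat_of_nonneg hnn]
    have htc : t * (2 * y - x) = c := div_mul_cancel₀ c hd.ne'
    refine ⟨⌊t⌋.toNat, ⟨by omega, by omega⟩, ?_⟩
    rw [mem_iff n _ hn]
    refine ⟨C1, C2, C3, C4, ?_, ?_⟩
    · rw [hcast]
      have h1 : ((⌊t⌋ : ℤ) : ℝ) ≤ t := Int.floor_le t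
      calc ((⌊t⌋ : ℤ) : ℝ) * (2 * y - x) ≤ t * (2 * y - x) :=
            mul_le_mul_of_nonneg_right h1 hd.le
        _ = c := htc
    · rw [hcast]
      have h2 : t < ((⌊t⌋ : ℤ) : ℝ) + 1 := Int.lt_floor_add_one t
      calc c = t * (2 * y - x) := htc.symm
        _ < (((⌊t⌋ : ℤ) : ℝ) + 1) * (2 * y - x) := by
            exact mul_lt_mul_of_pos_right h2 hd

noncomputable def fl (n : ℕ) (x : ℝ) : ℝ :=
  max ((1 + x) / 4) ((1 + ((n : ℝ) + 2) * x) / (2 * (n : ℝ) + 5))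

noncomputable def gl (n : ℕ) (x : ℝ) : ℝ := (1 + ((n : ℝ) + 1) * x) / (2 * (n : ℝ) + 3)

lemma Ureg_eq (n : ℕ) (hn : 2 ≤ n) :
    Ureg n = {p : ℝ × ℝ |
      p.1 ∈ Ioc ((2 * (n : ℝ) - 1) / (2 * (n : ℝ) + 1)) 1 ∧
      p.2 ∈ Ioc (fl n p.1) (gl n p.1)} := by
  have hν : (2 : ℝ) ≤ (n : ℝ) := by exact_mod_cast hn
  have h1 : (0 : ℝ) < 2 * (n : ℝ) + 1 := by linarith
  have h3 : (0 : ℝ) < 2 * (n : ℝ) + 3 := by linarith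
  have h5 : (0 : ℝ) < 2 * (n : ℝ) + 5 := by linarith
  have h4 : (0 : ℝ) < 4 := by norm_num
  ext ⟨x, y⟩
  simp only [Ureg, Set.mem_setOf_eq, Set.mem_Ioc, fl, gl, max_lt_iff]
  constructor
  · rintro ⟨C1, C2, C3, C4⟩
    refine ⟨⟨?_, C2⟩, ⟨?_, ?_⟩, ?_⟩
    · rw [div_lt_iff₀ h1]
      nlinarith [mul_lt_mul_of_pos_left C1 h3]
    · rw [div_lt_iff₀ h4]; linarith
    · rw [div_lt_iff₀ h5]; nlinarith
    · rw [le_div_iff₀ h3]; nlinarith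
  · rintro ⟨⟨ha, C2⟩, ⟨hf1, hf2⟩, hg⟩
    rw [div_lt_iff₀ h4] at hf1
    rw [div_lt_iff₀ h5] at hf2
    rw [le_div_iff₀ h3] at hg
    refine ⟨by linarith, C2, by nlinarith, by nlinarith⟩

lemma integral_affine (α β u v : ℝ) :
    ∫ x in u..v, (α + β * x) = α * (v - u) + β * (v ^ 2 - u ^ 2) / 2 := by
  have h1 : IntervalIntegrable (fun _ => α) volume u v := intervalIntegrable_const
  have h2 : IntervalIntegrable (fun x => β * x) volume u v :=
    (continuous_const.mul continuous_id).intervalIntegrable u v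
  rw [intervalIntegral.integral_add h1 h2, intervalIntegral.integral_const,
    intervalIntegral.integral_const_mul, integral_id, smul_eq_mul]
  ring

lemma volume_Ureg (n : ℕ) (hn : 2 ≤ n) :
    volume (Ureg n) =
      ENNReal.ofReal (2 / ((2 * (n : ℝ) + 1) * (2 * (n : ℝ) + 3) * (2 * (n : ℝ) + 5))) := by
  have hν : (2 : ℝ) ≤ (n : ℝ) := by exact_mod_cast hn
  have h1 : (0 : ℝ) < 2 * (n : ℝ) + 1 := by linarith
  have h3 : (0 : ℝ) < 2 * (n : ℝ) + 3 := by linarith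
  have h5 : (0 : ℝ) < 2 * (n : ℝ) + 5 := by linarith
  set a : ℝ := (2 * (n : ℝ) - 1) / (2 * (n : ℝ) + 1) with hadef
  set b : ℝ := (2 * (n : ℝ) + 1) / (2 * (n : ℝ) + 3) with hbdef
  have hab : a < b := by
    rw [hadef, hbdef, div_lt_div_iff₀ h1 h3]; nlinarith
  have hb1 : b < 1 := by rw [hbdef, div_lt_one h3]; linarith
  have ha1 : a ≤ 1 := by linarith
  have hfc : Continuous (fl n) := by
    apply Continuous.max
    · exact (continuous_const.add continuous_id).div_const 4
    · exact (continuous_const.add (continuous_const.mul continuous_id)).div_const _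
  have hgc : Continuous (gl n) := by
    exact (continuous_const.add (continuous_const.mul continuous_id)).div_const _
  have hfg : ∀ x ∈ Ioc a 1, fl n x ≤ gl n x := by
    intro x hx
    obtain ⟨hxa, hx1⟩ := hx
    rw [hadef, div_lt_iff₀ h1] at hxa
    rw [fl, gl, max_le_iff]
    constructor
    · rw [div_le_div_iff₀ (by norm_num) h3]; nlinarith
    · rw [div_le_div_iff₀ h5 h3]; nlinarith
  set S := {p : ℝ × ℝ | p.1 ∈ Ioc a 1 ∧ p.2 ∈ Ioc (fl n p.1) (gl n p.1)} with hSdef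
  have hSalt : S = (Prod.fst ⁻¹' Ioc a 1) ∩
      ({p : ℝ × ℝ | fl n p.1 < p.2} ∩ {p : ℝ × ℝ | p.2 ≤ gl n p.1}) := by
    ext ⟨x, y⟩; simp [hSdef, Set.mem_Ioc, and_assoc]
  have hmeas : MeasurableSet S := by
    rw [hSalt]
    exact (measurable_fst measurableSet_Ioc).inter
      ((measurableSet_lt (hfc.measurable.comp measurable_fst) measurable_snd).inter
        (measurableSet_le measurable_snd (hgc.measurable.comp measurable_fst)))
  rw [Ureg_eq n hn, ← hSdef]
  rw [Measure.volume_eq_prod, Measure.prod_apply hmeas]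
  have step1 : ∫⁻ x, volume (Prod.mk x ⁻¹' S) =
      ∫⁻ x, (Ioc a 1).indicator (fun x => ENNReal.ofReal (gl n x - fl n x)) x := by
    refine lintegral_congr fun x => ?_
    have hpre : (Prod.mk x ⁻¹' S) =
        if x ∈ Ioc a 1 then Ioc (fl n x) (gl n x) else (∅ : Set ℝ) := by
      split_ifs with hx
      · ext z; simp only [hSdef, Set.mem_preimage, Set.mem_setOf_eq, Set.mem_Ioc]
        exact ⟨fun h => h.2, fun h => ⟨hx, h⟩⟩
      · ext z; simp only [hSdef, Set.mem_preimage, Set.mem_setOf_eq, Set.mem_Ioc,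
          Set.mem_empty_iff_false, iff_false, not_and]
        exact fun h _ => absurd h hx
    rw [hpre]
    split_ifs with hx
    · rw [Set.indicator_of_mem hx, Real.volume_Ioc]
    · rw [Set.indicator_of_notMem hx]; exact measure_empty
  rw [step1, lintegral_indicator measurableSet_Ioc]
  have hint : IntegrableOn (fun x => gl n x - fl n x) (Ioc a 1) volume :=
    (hgc.sub hfc).integrableOn_Ioc
  have hnonneg : 0 ≤ᵐ[volume.restrict (Ioc a 1)] fun x => gl n x - fl n x :=
    (ae_restrict_iff' measurableSet_Ioc).2 (ae_of_all _ fun x hx => sub_nonneg.2 (hfg x hx))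
  rw [← ofReal_integral_eq_lintegral_ofReal hint hnonneg]
  congr 1
  rw [← intervalIntegral.integral_of_le ha1]
  have hi1 : IntervalIntegrable (fun x => gl n x - fl n x) volume a b :=
    (hgc.sub hfc).intervalIntegrable a b
  have hi2 : IntervalIntegrable (fun x => gl n x - fl n x) volume b 1 :=
    (hgc.sub hfc).intervalIntegrable b 1
  rw [← intervalIntegral.integral_add_adjacent_intervals hi1 hi2]
  have e1 : ∫ x in a..b, (gl n x - fl n x) =
      ∫ x in a..b, ((1 / (2 * (n : ℝ) + 3) - 1 / 4) +
        (((n : ℝ) + 1) / (2 * (n : ℝ) + 3) - 1 / 4) * x) := by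
    refine intervalIntegral.integral_congr fun x hx => ?_
    rw [Set.uIcc_of_le hab.le, Set.mem_Icc] at hx
    have hxb : x * (2 * (n : ℝ) + 3) ≤ 2 * (n : ℝ) + 1 := by
      have := hx.2
      rw [hbdef, le_div_iff₀ h3] at this
      linarith
    have hmax : fl n x = (1 + x) / 4 := by
      rw [fl, max_eq_left]
      rw [div_le_div_iff₀ h5 (by norm_num : (0:ℝ) < 4)]
      nlinarith
    rw [hmax, gl]
    field_simp
    ring
  have e2 : ∫ x in b..1, (gl n x - fl n x) =
      ∫ x in b..1, ((1 / (2 * (n : ℝ) + 3) - 1 / (2 * (n : ℝ) + 5)) +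
        (((n : ℝ) + 1) / (2 * (n : ℝ) + 3) - ((n : ℝ) + 2) / (2 * (n : ℝ) + 5)) * x) := by
    refine intervalIntegral.integral_congr fun x hx => ?_
    rw [Set.uIcc_of_le hb1.le, Set.mem_Icc] at hx
    have hxb : 2 * (n : ℝ) + 1 ≤ x * (2 * (n : ℝ) + 3) := by
      have := hx.1
      rw [hbdef, div_le_iff₀ h3] at this
      linarith
    have hmax : fl n x = (1 + ((n : ℝ) + 2) * x) / (2 * (n : ℝ) + 5) := by
      rw [fl, max_eq_right]
      rw [div_le_div_iff₀ (by norm_num : (0:ℝ) < 4) h5]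
      nlinarith
    rw [hmax, gl]
    field_simp
    ring
  rw [e1, e2, integral_affine, integral_affine, hadef, hbdef]
  have h1' : (2 * (n : ℝ) + 1) ≠ 0 := ne_of_gt h1
  have h3' : (2 * (n : ℝ) + 3) ≠ 0 := ne_of_gt h3
  have h5' : (2 * (n : ℝ) + 5) ≠ 0 := ne_of_gt h5
  field_simp
  ring

/-- For n ≥ 2, 𝒯(3,2ⁿ,1,k) is nonempty iff 4n+2 ≤ k ≤ 4n+8, and the area of the union of the
nonempty regions 𝒯(3,2ⁿ,1,k), 4n+2 ≤ k ≤ 4n+8, equals 2/((2n+1)(2n+3)(2n+5)). -/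
theorem TT_three_twos_one_k (n : ℕ) (hn : 2 ≤ n) :
    (∀ k : ℕ, 0 < k →
      ((TTlist (3 :: (List.replicate n 2 ++ [1, k]))).Nonempty ↔
        4 * n + 2 ≤ k ∧ k ≤ 4 * n + 8)) ∧
    volume (⋃ k ∈ Finset.Icc (4 * n + 2) (4 * n + 8),
        TTlist (3 :: (List.replicate n 2 ++ [1, k]))) =
      ENNReal.ofReal (2 / ((2 * (n : ℝ) + 1) * (2 * (n : ℝ) + 3) * (2 * (n : ℝ) + 5))) := by
  constructor
  · intro k _
    exact ⟨fun h => kmem n k hn h, fun ⟨h1, h2⟩ => witness n k hn h1 h2⟩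
  · rw [union_eq n hn, volume_Ureg n hn]
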